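/- Let b be a symmetric bilinear form on a real vector space V of dimension d, and suppose V has a basis e₁, …, e_d with b(e_i, e_j) = 0 for i ≠ j, b(e_i, e_i) = 1 for 1 ≤ i ≤ p, b(e_i, e_i) = −1 for p < i ≤ p + q, and b(e_i, e_i) = 0 for i > p + q. Let u ∈ V satisfy b(u,u) = 0 and b(u,y) ≠ 0 for some y ∈ V. Then the (d−1)-dimensional subspace u^⊥ᵇ = {x ∈ V : b(u,x) = 0} has a basis f₁, …, f_{d−1} with b(f_i, f_j) = 0 for i ≠ j, in which exactly p − 1 of the values b(f_i, f_i) equal 1, exactly q − 1 equal −1, and exactly d − p − q + 1 equal 0. In other words, the sign pattern of the restriction of b to u^⊥ᵇ arises from that of b by replacing one plus-minus pair with a zero. -/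

import Mathlib

open Module


lemma natCard_sum_left {α β : Type*} (P : α ⊕ β → Prop)
    (h : ∀ y, ¬ P (Sum.inr y)) :
    Nat.card {x // P x} = Nat.card {a // P (Sum.inl a)} := by
  apply Nat.card_congr
  refine ⟨fun x => ?_, fun a => ⟨Sum.inl a.1, a.2⟩, ?_, ?_⟩
  · rcases x with ⟨a | y, hx⟩
    · exact ⟨a, hx⟩
    · exact absurd hx (h y)
  · rintro ⟨a | y, hx⟩
    · rfl
    · exact absurd hx (h y)
  · rintro ⟨a, hx⟩
    rfl

lemma natCard_sum_right {α β : Type*} (P : α ⊕ β → Prop)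
    (h : ∀ a, ¬ P (Sum.inl a)) :
    Nat.card {x // P x} = Nat.card {y // P (Sum.inr y)} := by
  apply Nat.card_congr
  refine ⟨fun x => ?_, fun a => ⟨Sum.inr a.1, a.2⟩, ?_, ?_⟩
  · rcases x with ⟨a | y, hx⟩
    · exact absurd hx (h a)
    · exact ⟨y, hx⟩
  · rintro ⟨a | y, hx⟩
    · exact absurd hx (h a)
    · rfl
  · rintro ⟨a, hx⟩
    rfl

lemma natCard_sum_all {α : Type*} [Fintype α] (P : α → Prop)
    (h : ∀ a, P a) : Nat.card {x // P x} = Fintype.card α := by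
  rw [Nat.card_congr (Equiv.subtypeUnivEquiv h), Nat.card_eq_fintype_card]

set_option maxHeartbeats 1000000 in
/-- If a symmetric bilinear form `b` on a `d`-dimensional real
vector space has a diagonalizing basis with `p` plus-ones, `q` minus-ones and
`d − p − q` zeros on the diagonal, and `u` satisfies `b(u,u) = 0` and
`u ∉ rad(b)`, then the hyperplane `u^⊥ᵇ = {x | b(u,x) = 0}` has a
`b`-diagonalizing basis with exactly `p − 1` plus-ones, `q − 1` minus-ones and
`d − p − q + 1` zeros on the diagonal. -/
theorem stmt10
    {V : Type*} [AddCommGroup V] [Module ℝ V] [FiniteDimensional ℝ V]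
    (b : V →ₗ[ℝ] V →ₗ[ℝ] ℝ)
    (hb_symm : ∀ y z : V, b y z = b z y)
    (d p q : ℕ) (hpq : p + q ≤ d)
    (e : Basis (Fin d) ℝ V)
    (he_offdiag : ∀ i j : Fin d, i ≠ j → b (e i) (e j) = 0)
    (he_pos : ∀ i : Fin d, (i : ℕ) < p → b (e i) (e i) = 1)
    (he_neg : ∀ i : Fin d, p ≤ (i : ℕ) → (i : ℕ) < p + q → b (e i) (e i) = -1)
    (he_zero : ∀ i : Fin d, p + q ≤ (i : ℕ) → b (e i) (e i) = 0)
    (u : V) (huu : b u u = 0) (hu : ∃ y : V, b u y ≠ 0) :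
    ∃ f : Basis (Fin (d - 1)) ℝ (LinearMap.ker (b u)),
      (∀ i j : Fin (d - 1), i ≠ j → b (f i : V) (f j : V) = 0) ∧
      Nat.card {i : Fin (d - 1) // b (f i : V) (f i : V) = 1} = p - 1 ∧
      Nat.card {i : Fin (d - 1) // b (f i : V) (f i : V) = -1} = q - 1 ∧
      Nat.card {i : Fin (d - 1) // b (f i : V) (f i : V) = 0} = d - p - q + 1 := by
  classical
  set r := d - p - q with hr
  have hdeq : p + (q + r) = d := by omega
  set σd : (Fin p ⊕ (Fin q ⊕ Fin r)) ≃ Fin d :=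
    ((Equiv.refl (Fin p)).sumCongr finSumFinEquiv).trans
      (finSumFinEquiv.trans (finCongr hdeq)) with hσd
  have hσP : ∀ k : Fin p, (σd (Sum.inl k) : ℕ) = k := by
    intro k; simp [hσd]
  have hσN : ∀ k : Fin q, (σd (Sum.inr (Sum.inl k)) : ℕ) = p + k := by
    intro k; simp [hσd]
  have hσZ : ∀ k : Fin r, (σd (Sum.inr (Sum.inr k)) : ℕ) = p + (q + k) := by
    intro k; simp [hσd, add_assoc]
  set c : Fin d → ℝ := fun i => e.repr u i with hc
  have hue : ∀ i : Fin d, b u (e i) = c i * b (e i) (e i) := by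
    intro i
    conv_lhs => rw [← e.sum_repr u]
    rw [map_sum, LinearMap.sum_apply]
    rw [Finset.sum_eq_single i]
    · rw [map_smul]; simp [smul_eq_mul, hc]
    · intro j _ hj
      rw [map_smul, LinearMap.smul_apply, he_offdiag j i hj, smul_zero]
    · simp
  have huP : ∀ k : Fin p, b u (e (σd (Sum.inl k))) = c (σd (Sum.inl k)) := by
    intro k
    rw [hue, he_pos _ (by rw [hσP]; exact k.2), mul_one]
  have huN : ∀ k : Fin q, b u (e (σd (Sum.inr (Sum.inl k)))) = - c (σd (Sum.inr (Sum.inl k))) := by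
    intro k
    rw [hue, he_neg _ (by rw [hσN]; omega) (by rw [hσN]; have := k.2; omega)]
    ring
  have huZ : ∀ k : Fin r, b u (e (σd (Sum.inr (Sum.inr k)))) = 0 := by
    intro k
    rw [hue, he_zero _ (by rw [hσZ]; omega), mul_zero]
  have hrad : ∀ (k : Fin r) (w : V), b w (e (σd (Sum.inr (Sum.inr k)))) = 0 := by
    intro k w
    have hz : b.flip (e (σd (Sum.inr (Sum.inr k)))) = 0 := by
      apply e.ext
      intro j
      by_cases hj : j = σd (Sum.inr (Sum.inr k))
      · subst hj
        simpa using he_zero _ (by rw [hσZ]; omega)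
      · simpa using he_offdiag _ _ hj
    simpa using LinearMap.congr_fun hz w
  -- coordinate vectors
  set vP : EuclideanSpace ℝ (Fin p) := WithLp.toLp 2 (fun k => c (σd (Sum.inl k))) with hvPdef
  set vN : EuclideanSpace ℝ (Fin q) := WithLp.toLp 2 (fun k => c (σd (Sum.inr (Sum.inl k)))) with hvNdef
  have hbuu : ∑ k : Fin p, vP k * vP k = ∑ k : Fin q, vN k * vN k := by
    have h1 : b u u = ∑ i : Fin d, c i * b u (e i) := by
      have key : ∀ w : V, b w u = ∑ i : Fin d, c i * b w (e i) := by
        intro w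
        conv_lhs => rw [← e.sum_repr u]
        rw [map_sum]
        exact Finset.sum_congr rfl fun i _ => by rw [map_smul, smul_eq_mul]
      exact key u
    have h2 : ∑ i : Fin d, c i * b u (e i)
        = ∑ x : Fin p ⊕ (Fin q ⊕ Fin r), c (σd x) * b u (e (σd x)) :=
      (Fintype.sum_equiv σd _ _ (fun x => rfl)).symm
    rw [h1, h2, Fintype.sum_sum_type, Fintype.sum_sum_type] at huu
    have h3 : ∑ k : Fin p, c (σd (Sum.inl k)) * b u (e (σd (Sum.inl k)))
        = ∑ k : Fin p, vP k * vP k :=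
      Finset.sum_congr rfl fun k _ => by rw [huP k]
    have h4 : ∑ k : Fin q, c (σd (Sum.inr (Sum.inl k))) * b u (e (σd (Sum.inr (Sum.inl k))))
        = -∑ k : Fin q, vN k * vN k := by
      rw [← Finset.sum_neg_distrib]
      exact Finset.sum_congr rfl fun k _ => by rw [huN k]; ring
    have h5 : ∑ k : Fin r, c (σd (Sum.inr (Sum.inr k))) * b u (e (σd (Sum.inr (Sum.inr k)))) = 0 :=
      Finset.sum_eq_zero fun k _ => by rw [huZ k, mul_zero]
    rw [h3, h4, h5] at huu
    linarith
  have hSne : (∑ k : Fin p, vP k * vP k) ≠ 0 := by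
    intro h0
    have hvP0 : ∀ k, vP k = 0 := by
      intro k
      have := (Finset.sum_eq_zero_iff_of_nonneg
        (fun k _ => mul_self_nonneg (vP k))).mp h0 k (Finset.mem_univ k)
      exact mul_self_eq_zero.mp this
    have hvN0 : ∀ k, vN k = 0 := by
      intro k
      have h0' : ∑ k : Fin q, vN k * vN k = 0 := by rw [← hbuu]; exact h0
      have := (Finset.sum_eq_zero_iff_of_nonneg
        (fun k _ => mul_self_nonneg (vN k))).mp h0' k (Finset.mem_univ k)
      exact mul_self_eq_zero.mp this
    obtain ⟨y, hy⟩ := hu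
    apply hy
    have hbu0 : b u = 0 := by
      apply e.ext
      intro i
      obtain ⟨x, rfl⟩ := σd.surjective i
      rcases x with k | k | k
      · rw [huP k]; exact hvP0 k
      · rw [huN k]; rw [show c (σd (Sum.inr (Sum.inl k))) = vN k from rfl, hvN0 k]; simp
      · simpa using huZ k
    rw [hbu0]; rfl
  have hvPne : vP ≠ 0 := by
    intro h
    exact hSne (Finset.sum_eq_zero fun k _ => by rw [show vP k = 0 from by simp [h]]; ring)
  have hvNne : vN ≠ 0 := by
    intro h
    apply hSne
    rw [hbuu]
    exact Finset.sum_eq_zero fun k _ => by rw [show vN k = 0 from by simp [h]]; ring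
  have hp1 : 1 ≤ p := by
    obtain ⟨k, -⟩ : ∃ k, vP k ≠ 0 := by
      by_contra! h'; exact hvPne (WithLp.ofLp_injective (p := 2) (funext fun k => by simp [h']))
    exact k.pos
  have hq1 : 1 ≤ q := by
    obtain ⟨k, -⟩ : ∃ k, vN k ≠ 0 := by
      by_contra! h'; exact hvNne (WithLp.ofLp_injective (p := 2) (funext fun k => by simp [h']))
    exact k.pos
  -- orthonormal bases of the orthogonal complements
  haveI factP : Fact (finrank ℝ (EuclideanSpace ℝ (Fin p)) = (p - 1) + 1) :=
    ⟨by rw [finrank_euclideanSpace_fin]; omega⟩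
  haveI factQ : Fact (finrank ℝ (EuclideanSpace ℝ (Fin q)) = (q - 1) + 1) :=
    ⟨by rw [finrank_euclideanSpace_fin]; omega⟩
  set OP : OrthonormalBasis (Fin (p - 1)) ℝ ((ℝ ∙ vP)ᗮ) :=
    OrthonormalBasis.fromOrthogonalSpanSingleton (p - 1) hvPne with hOPdef
  set ON : OrthonormalBasis (Fin (q - 1)) ℝ ((ℝ ∙ vN)ᗮ) :=
    OrthonormalBasis.fromOrthogonalSpanSingleton (q - 1) hvNne with hONdef
  have hOP : ∀ i j : Fin (p - 1),
      ∑ k, (OP i : EuclideanSpace ℝ (Fin p)) k * (OP j : EuclideanSpace ℝ (Fin p)) k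
        = if i = j then 1 else 0 := by
    intro i j
    have h := orthonormal_iff_ite.mp OP.orthonormal i j
    rw [Submodule.coe_inner, real_inner_comm] at h
    simpa [PiLp.inner_apply, RCLike.inner_apply] using h
  have hON : ∀ i j : Fin (q - 1),
      ∑ k, (ON i : EuclideanSpace ℝ (Fin q)) k * (ON j : EuclideanSpace ℝ (Fin q)) k
        = if i = j then 1 else 0 := by
    intro i j
    have h := orthonormal_iff_ite.mp ON.orthonormal i j
    rw [Submodule.coe_inner, real_inner_comm] at h
    simpa [PiLp.inner_apply, RCLike.inner_apply] using h
  have hOPv : ∀ i : Fin (p - 1), ∑ k, vP k * (OP i : EuclideanSpace ℝ (Fin p)) k = 0 := by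
    intro i
    have hmem := (OP i).2
    rw [Submodule.mem_orthogonal] at hmem
    have h := hmem vP (Submodule.mem_span_singleton_self vP)
    rw [real_inner_comm] at h
    simpa [PiLp.inner_apply, RCLike.inner_apply] using h
  have hONv : ∀ i : Fin (q - 1), ∑ k, vN k * (ON i : EuclideanSpace ℝ (Fin q)) k = 0 := by
    intro i
    have hmem := (ON i).2
    rw [Submodule.mem_orthogonal] at hmem
    have h := hmem vN (Submodule.mem_span_singleton_self vN)
    rw [real_inner_comm] at h
    simpa [PiLp.inner_apply, RCLike.inner_apply] using h
  -- block maps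
  set ΦP : (Fin p → ℝ) → V := fun x => ∑ k, x k • e (σd (Sum.inl k)) with hΦPdef
  set ΦN : (Fin q → ℝ) → V := fun x => ∑ k, x k • e (σd (Sum.inr (Sum.inl k))) with hΦNdef
  have hexp : ∀ (x : Fin p → ℝ) (w : V), b (ΦP x) w = ∑ k, x k * b (e (σd (Sum.inl k))) w := by
    intro x w
    rw [hΦPdef, map_sum, LinearMap.sum_apply]
    exact Finset.sum_congr rfl fun k _ => by
      rw [map_smul, LinearMap.smul_apply, smul_eq_mul]
  have hexpN : ∀ (x : Fin q → ℝ) (w : V),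
      b (ΦN x) w = ∑ k, x k * b (e (σd (Sum.inr (Sum.inl k)))) w := by
    intro x w
    rw [hΦNdef, map_sum, LinearMap.sum_apply]
    exact Finset.sum_congr rfl fun k _ => by
      rw [map_smul, LinearMap.smul_apply, smul_eq_mul]
  have hexp2 : ∀ (w : V) (x : Fin p → ℝ), b w (ΦP x) = ∑ k, x k * b w (e (σd (Sum.inl k))) := by
    intro w x
    rw [hΦPdef, map_sum]
    exact Finset.sum_congr rfl fun k _ => by rw [map_smul, smul_eq_mul]
  have hexp2N : ∀ (w : V) (x : Fin q → ℝ),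
      b w (ΦN x) = ∑ k, x k * b w (e (σd (Sum.inr (Sum.inl k)))) := by
    intro w x
    rw [hΦNdef, map_sum]
    exact Finset.sum_congr rfl fun k _ => by rw [map_smul, smul_eq_mul]
  have hinjP : ∀ {k l : Fin p}, k ≠ l → σd (Sum.inl k) ≠ σd (Sum.inl l) := by
    intro k l hkl h
    exact hkl (Sum.inl.inj (σd.injective h))
  have hinjN : ∀ {k l : Fin q}, k ≠ l →
      σd (Sum.inr (Sum.inl k)) ≠ σd (Sum.inr (Sum.inl l)) := by
    intro k l hkl h
    exact hkl (Sum.inl.inj (Sum.inr.inj (σd.injective h)))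
  have hbPP : ∀ x y : Fin p → ℝ, b (ΦP x) (ΦP y) = ∑ k, x k * y k := by
    intro x y
    rw [hexp]
    refine Finset.sum_congr rfl fun k _ => ?_
    rw [hexp2]
    rw [Finset.sum_eq_single k]
    · rw [he_pos _ (by rw [hσP]; exact k.2)]; ring
    · intro l _ hlk
      rw [he_offdiag _ _ (hinjP hlk).symm, mul_zero]
    · simp
  have hbNN : ∀ x y : Fin q → ℝ, b (ΦN x) (ΦN y) = -∑ k, x k * y k := by
    intro x y
    rw [hexpN, ← Finset.sum_neg_distrib]
    refine Finset.sum_congr rfl fun k _ => ?_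
    rw [hexp2N]
    rw [Finset.sum_eq_single k]
    · rw [he_neg _ (by rw [hσN]; omega) (by rw [hσN]; have := k.2; omega)]; ring
    · intro l _ hlk
      rw [he_offdiag _ _ (hinjN hlk).symm, mul_zero]
    · simp
  have hbPN : ∀ (x : Fin p → ℝ) (y : Fin q → ℝ), b (ΦP x) (ΦN y) = 0 := by
    intro x y
    rw [hexp]
    refine Finset.sum_eq_zero fun k _ => ?_
    rw [hexp2N]
    rw [Finset.sum_eq_zero, mul_zero]
    intro l _
    rw [he_offdiag _ _ (by intro h; simpa using σd.injective h), mul_zero]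
  have hbuP : ∀ x : Fin p → ℝ, b u (ΦP x) = ∑ k, vP k * x k := by
    intro x
    rw [hexp2]
    exact Finset.sum_congr rfl fun k _ => by rw [huP k, mul_comm]
  have hbuN : ∀ x : Fin q → ℝ, b u (ΦN x) = -∑ k, vN k * x k := by
    intro x
    rw [hexp2N, ← Finset.sum_neg_distrib]
    exact Finset.sum_congr rfl fun k _ => by rw [huN k]; show x k * -vN k = _; ring
  -- the candidate family
  set F0 : (Fin (p - 1) ⊕ (Fin (q - 1) ⊕ (Fin r ⊕ Unit))) → V := fun x =>
    Sum.elim (fun i => ΦP (OP i))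
      (Sum.elim (fun j => ΦN (ON j))
        (Sum.elim (fun k => e (σd (Sum.inr (Sum.inr k)))) (fun _ => u))) x with hF0def
  -- diagonal values
  have hdP : ∀ i : Fin (p - 1), b (F0 (Sum.inl i)) (F0 (Sum.inl i)) = 1 := by
    intro i
    show b (ΦP (OP i)) (ΦP (OP i)) = 1
    simp only [hbPP]
    rw [hOP, if_pos rfl]
  have hdN : ∀ j : Fin (q - 1),
      b (F0 (Sum.inr (Sum.inl j))) (F0 (Sum.inr (Sum.inl j))) = -1 := by
    intro j
    show b (ΦN (ON j)) (ΦN (ON j)) = -1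
    simp only [hbNN]
    rw [hON, if_pos rfl]
  have hdZ : ∀ k : Fin r,
      b (F0 (Sum.inr (Sum.inr (Sum.inl k)))) (F0 (Sum.inr (Sum.inr (Sum.inl k)))) = 0 :=
    fun k => hrad k _
  have hdU : b (F0 (Sum.inr (Sum.inr (Sum.inr ())))) (F0 (Sum.inr (Sum.inr (Sum.inr ())))) = 0 :=
    huu
  -- b u kills every member
  have hkerP : ∀ i : Fin (p - 1), b u (ΦP (OP i)) = 0 := by
    intro i
    rw [hbuP]
    exact hOPv i
  have hkerN : ∀ j : Fin (q - 1), b u (ΦN (ON j)) = 0 := by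
    intro j
    rw [hbuN]
    rw [hONv, neg_zero]
  have hmem : ∀ x, b u (F0 x) = 0 := by
    rintro (i | j | k | _)
    · exact hkerP i
    · exact hkerN j
    · exact hrad k u
    · exact huu
  -- pairwise orthogonality
  have horth : ∀ x y, x ≠ y → b (F0 x) (F0 y) = 0 := by
    rintro (i | j | k | _) (i' | j' | k' | _) hxy
    · show b (ΦP (OP i)) (ΦP (OP i')) = 0
      simp only [hbPP]
      rw [hOP, if_neg (by simpa using hxy)]
    · exact hbPN _ _
    · exact hrad k' _
    · show b (ΦP (OP i)) u = 0
      rw [hb_symm]; exact hkerP i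
    · show b (ΦN (ON j)) (ΦP (OP i')) = 0
      rw [hb_symm]; exact hbPN _ _
    · show b (ΦN (ON j)) (ΦN (ON j')) = 0
      simp only [hbNN]
      rw [hON, if_neg (by simpa using hxy), neg_zero]
    · exact hrad k' _
    · show b (ΦN (ON j)) u = 0
      rw [hb_symm]; exact hkerN j
    · show b (e (σd (Sum.inr (Sum.inr k)))) (ΦP (OP i')) = 0
      rw [hb_symm]; exact hrad k _
    · show b (e (σd (Sum.inr (Sum.inr k)))) (ΦN (ON j')) = 0
      rw [hb_symm]; exact hrad k _
    · show b (e (σd (Sum.inr (Sum.inr k)))) (e (σd (Sum.inr (Sum.inr k')))) = 0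
      exact hrad k' _
    · show b (e (σd (Sum.inr (Sum.inr k)))) u = 0
      rw [hb_symm]; exact hrad k u
    · show b u (ΦP (OP i')) = 0
      exact hkerP i'
    · show b u (ΦN (ON j')) = 0
      exact hkerN j'
    · exact hrad k' _
    · exact absurd rfl hxy
  -- linear independence
  have hF0li : LinearIndependent ℝ F0 := by
    rw [Fintype.linearIndependent_iff]
    intro g hg
    have happ : ∀ w : V, ∑ x, g x * b (F0 x) w = 0 := by
      intro w
      have h := congrArg (fun z => b z w) hg
      simpa [map_sum, LinearMap.sum_apply, smul_eq_mul] using h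
    have key : ∀ w : V, (∀ i, b (F0 (Sum.inl i)) w = 0) →
        (∀ j, b (F0 (Sum.inr (Sum.inl j))) w = 0) →
        (∀ k, b (F0 (Sum.inr (Sum.inr (Sum.inl k)))) w = 0) →
        g (Sum.inr (Sum.inr (Sum.inr ()))) * b u w = 0 := by
      intro w h1 h2 h3
      have h := happ w
      rw [Fintype.sum_sum_type, Fintype.sum_sum_type, Fintype.sum_sum_type] at h
      rw [Finset.sum_eq_zero (fun (i : Fin (p - 1)) _ => by rw [h1 i, mul_zero]),
          Finset.sum_eq_zero (fun (j : Fin (q - 1)) _ => by rw [h2 j, mul_zero]),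
          Finset.sum_eq_zero (fun (k : Fin r) _ => by rw [h3 k, mul_zero])] at h
      simpa [hF0def] using h
    have hgu : g (Sum.inr (Sum.inr (Sum.inr ()))) = 0 := by
      have hP1 : ∀ i, b (F0 (Sum.inl i)) (ΦP vP) = 0 := by
        intro i
        show b (ΦP _) (ΦP vP) = 0
        simp only [hbPP]
        have h0 := hOPv i
        rw [Finset.sum_congr rfl
          (fun k _ => mul_comm (vP k) ((OP i : EuclideanSpace ℝ (Fin p)) k))] at h0
        exact h0
      have hP2 : ∀ j, b (F0 (Sum.inr (Sum.inl j))) (ΦP vP) = 0 := by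
        intro j
        show b (ΦN _) (ΦP vP) = 0
        rw [hb_symm]; exact hbPN _ _
      have hP3 : ∀ k, b (F0 (Sum.inr (Sum.inr (Sum.inl k)))) (ΦP vP) = 0 := by
        intro k
        show b (e _) (ΦP vP) = 0
        rw [hb_symm]; exact hrad k _
      have h := key (ΦP vP) hP1 hP2 hP3
      rw [hbuP] at h
      exact (mul_eq_zero.mp h).resolve_right hSne
    have hgA : ∀ i0 : Fin (p - 1), g (Sum.inl i0) = 0 := by
      intro i0
      have h := happ (F0 (Sum.inl i0))
      rw [Fintype.sum_sum_type, Fintype.sum_sum_type, Fintype.sum_sum_type] at h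
      rw [Finset.sum_eq_zero
            (fun (j : Fin (q - 1)) _ => by
              rw [horth (Sum.inr (Sum.inl j)) (Sum.inl i0) (by simp), mul_zero]),
          Finset.sum_eq_zero
            (fun (k : Fin r) _ => by
              rw [horth (Sum.inr (Sum.inr (Sum.inl k))) (Sum.inl i0) (by simp), mul_zero]),
          Finset.sum_eq_zero
            (fun (x : Unit) _ => by
              rw [show b (F0 (Sum.inr (Sum.inr (Sum.inr x)))) (F0 (Sum.inl i0)) = 0 from
                hmem (Sum.inl i0), mul_zero])] at h
      rw [Finset.sum_eq_single i0] at h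
      · rw [hdP i0, mul_one] at h
        simpa using h
      · intro l _ hl
        rw [horth _ _ (by simpa using hl), mul_zero]
      · simp
    have hgB : ∀ j0 : Fin (q - 1), g (Sum.inr (Sum.inl j0)) = 0 := by
      intro j0
      have h := happ (F0 (Sum.inr (Sum.inl j0)))
      rw [Fintype.sum_sum_type, Fintype.sum_sum_type, Fintype.sum_sum_type] at h
      rw [Finset.sum_eq_zero
            (fun (i : Fin (p - 1)) _ => by
              rw [horth (Sum.inl i) (Sum.inr (Sum.inl j0)) (by simp), mul_zero]),
          Finset.sum_eq_zero
            (fun (k : Fin r) _ => by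
              rw [horth (Sum.inr (Sum.inr (Sum.inl k))) (Sum.inr (Sum.inl j0)) (by simp),
                mul_zero]),
          Finset.sum_eq_zero
            (fun (x : Unit) _ => by
              rw [show b (F0 (Sum.inr (Sum.inr (Sum.inr x)))) (F0 (Sum.inr (Sum.inl j0))) = 0 from
                hmem (Sum.inr (Sum.inl j0)), mul_zero])] at h
      rw [Finset.sum_eq_single j0] at h
      · rw [hdN j0] at h
        have : -(g (Sum.inr (Sum.inl j0))) = 0 := by linarith [h]
        linarith [this]
      · intro l _ hl
        rw [horth _ _ (by simpa using hl), mul_zero]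
      · simp
    have hgz : ∀ k0 : Fin r, g (Sum.inr (Sum.inr (Sum.inl k0))) = 0 := by
      have hz : ∑ k : Fin r,
          g (Sum.inr (Sum.inr (Sum.inl k))) • e (σd (Sum.inr (Sum.inr k))) = 0 := by
        have h := hg
        rw [Fintype.sum_sum_type, Fintype.sum_sum_type, Fintype.sum_sum_type] at h
        rw [Finset.sum_eq_zero (fun (i : Fin (p - 1)) _ => by rw [hgA i, zero_smul]),
            Finset.sum_eq_zero (fun (j : Fin (q - 1)) _ => by rw [hgB j, zero_smul]),
            Finset.sum_eq_zero (fun (x : Unit) _ => by rw [hgu, zero_smul])] at h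
      
        simpa [hF0def] using h
      have hli : LinearIndependent ℝ (fun k : Fin r => e (σd (Sum.inr (Sum.inr k)))) :=
        e.linearIndependent.comp _
          (fun k l hkl => Sum.inr.inj (Sum.inr.inj (σd.injective hkl)))
      exact fun k0 => Fintype.linearIndependent_iff.mp hli _ hz k0
    rintro (i | j | k | x)
    · exact hgA i
    · exact hgB j
    · exact hgz k
    · exact hgu
  -- dimension of the kernel
  have hbune : b u ≠ 0 := by
    obtain ⟨y, hy⟩ := hu
    intro h0
    exact hy (by rw [h0]; rfl)
  have hVd : finrank ℝ V = d := by
    rw [finrank_eq_card_basis e, Fintype.card_fin]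
  have hker : finrank ℝ (LinearMap.ker (b u)) = d - 1 := by
    have h4 := LinearMap.finrank_range_add_finrank_ker (b u)
    have h1 : LinearMap.range (b u) ≠ ⊥ := by rwa [ne_eq, LinearMap.range_eq_bot]
    have h2 : 0 < finrank ℝ (LinearMap.range (b u)) :=
      Module.finrank_pos_iff.mpr (Submodule.nontrivial_iff_ne_bot.mpr h1)
    have h3 : finrank ℝ (LinearMap.range (b u)) ≤ 1 := by
      have := Submodule.finrank_le (LinearMap.range (b u))
      simpa using this
    omega
  -- the basis
  have hmemker : ∀ x, F0 x ∈ LinearMap.ker (b u) := fun x => LinearMap.mem_ker.mpr (hmem x)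
  set F : (Fin (p - 1) ⊕ (Fin (q - 1) ⊕ (Fin r ⊕ Unit))) → LinearMap.ker (b u) :=
    fun x => ⟨F0 x, hmemker x⟩ with hFdef
  have hFli : LinearIndependent ℝ F :=
    LinearIndependent.of_comp (LinearMap.ker (b u)).subtype (by exact hF0li)
  have hcard : Fintype.card (Fin (p - 1) ⊕ (Fin (q - 1) ⊕ (Fin r ⊕ Unit)))
      = finrank ℝ (LinearMap.ker (b u)) := by
    simp only [Fintype.card_sum, Fintype.card_fin, Fintype.card_unit, hker]
    omega
  haveI : Nonempty (Fin (p - 1) ⊕ (Fin (q - 1) ⊕ (Fin r ⊕ Unit))) :=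
    ⟨Sum.inr (Sum.inr (Sum.inr ()))⟩
  set B : Basis (Fin (p - 1) ⊕ (Fin (q - 1) ⊕ (Fin r ⊕ Unit))) ℝ (LinearMap.ker (b u)) :=
    basisOfLinearIndependentOfCardEqFinrank hFli hcard with hBdef
  have hσcard : Fintype.card (Fin (p - 1) ⊕ (Fin (q - 1) ⊕ (Fin r ⊕ Unit)))
      = Fintype.card (Fin (d - 1)) := by
    simp only [Fintype.card_sum, Fintype.card_fin, Fintype.card_unit]
    omega
  set σ : (Fin (p - 1) ⊕ (Fin (q - 1) ⊕ (Fin r ⊕ Unit))) ≃ Fin (d - 1) :=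
    Fintype.equivOfCardEq hσcard with hσdef
  have hfcoe : ∀ i : Fin (d - 1), ((B.reindex σ) i : V) = F0 (σ.symm i) := by
    intro i
    rw [Module.Basis.reindex_apply]
    have hB : B (σ.symm i) = F (σ.symm i) := by
      rw [show ⇑B = F from coe_basisOfLinearIndependentOfCardEqFinrank hFli hcard]
    rw [hB]
  refine ⟨B.reindex σ, ?_, ?_, ?_, ?_⟩
  · intro i j hij
    rw [hfcoe i, hfcoe j]
    exact horth _ _ (fun hcc => hij (σ.symm.injective hcc))
  · have e1 := Nat.card_congr (Equiv.subtypeEquiv σ.symm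
      (p := fun i : Fin (d - 1) => b ((B.reindex σ) i : V) ((B.reindex σ) i : V) = 1)
      (q := fun x => b (F0 x) (F0 x) = 1)
      (fun i => by simp only [hfcoe i]))
    have hno1 : ∀ y : Fin (q - 1) ⊕ (Fin r ⊕ Unit),
        ¬ (b (F0 (Sum.inr y)) (F0 (Sum.inr y)) = 1) := by
      rintro (j | k | ⟨⟩) hx
      · rw [hdN j] at hx; norm_num at hx
      · rw [hdZ k] at hx; norm_num at hx
      · rw [hdU] at hx; norm_num at hx
    rw [e1, natCard_sum_left _ hno1, natCard_sum_all _ hdP, Fintype.card_fin]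
  · have e2 := Nat.card_congr (Equiv.subtypeEquiv σ.symm
      (p := fun i : Fin (d - 1) => b ((B.reindex σ) i : V) ((B.reindex σ) i : V) = -1)
      (q := fun x => b (F0 x) (F0 x) = -1)
      (fun i => by simp only [hfcoe i]))
    have hno2l : ∀ i : Fin (p - 1),
        ¬ (b (F0 (Sum.inl i)) (F0 (Sum.inl i)) = -1) := by
      intro i hx
      rw [hdP i] at hx; norm_num at hx
    have hno2r : ∀ y : Fin r ⊕ Unit,
        ¬ (b (F0 (Sum.inr (Sum.inr y))) (F0 (Sum.inr (Sum.inr y))) = -1) := by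
      rintro (k | ⟨⟩) hx
      · rw [hdZ k] at hx; norm_num at hx
      · rw [hdU] at hx; norm_num at hx
    rw [e2, natCard_sum_right _ hno2l, natCard_sum_left _ hno2r,
      natCard_sum_all _ hdN, Fintype.card_fin]
  · have e3 := Nat.card_congr (Equiv.subtypeEquiv σ.symm
      (p := fun i : Fin (d - 1) => b ((B.reindex σ) i : V) ((B.reindex σ) i : V) = 0)
      (q := fun x => b (F0 x) (F0 x) = 0)
      (fun i => by simp only [hfcoe i]))
    have hno3l : ∀ i : Fin (p - 1),
        ¬ (b (F0 (Sum.inl i)) (F0 (Sum.inl i)) = 0) := by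
      intro i hx
      rw [hdP i] at hx; norm_num at hx
    have hno3m : ∀ j : Fin (q - 1),
        ¬ (b (F0 (Sum.inr (Sum.inl j))) (F0 (Sum.inr (Sum.inl j))) = 0) := by
      intro j hx
      rw [hdN j] at hx; norm_num at hx
    have hall : ∀ y : Fin r ⊕ Unit,
        b (F0 (Sum.inr (Sum.inr y))) (F0 (Sum.inr (Sum.inr y))) = 0 := by
      rintro (k | ⟨⟩)
      · exact hdZ k
      · exact hdU
    rw [e3, natCard_sum_right _ hno3l, natCard_sum_right _ hno3m,
      natCard_sum_all _ hall, Fintype.card_sum, Fintype.card_fin, Fintype.card_unit]
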